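/- Let L be a lattice with negative definite symmetric bilinear form (·,·) with (E_i,E_j) ≥ 0 for i ≠ j. For any l' ∈ L' (the dual lattice, viewed inside L⊗Q), there exists a unique minimal effective element l_{l'} ∈ L (with respect to the coordinatewise partial order) such that l' − l_{l'} ∈ NE_Q := {x : (x, E_j) ≥ 0 for all j}. -/
import Mathlib

open Matrix

variable {J : Type*}

/-- The rational bilinear (intersection) form associated with the integral matrix `B`. -/
def bform [Fintype J] (B : Matrix J J ℤ) (x y : J → ℚ) : ℚ :=
  x ⬝ᵥ (B.map (fun n => (n : ℚ))).mulVec y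

/-- `B` is negative definite as a rational quadratic form. -/
def NegDef [Fintype J] (B : Matrix J J ℤ) : Prop :=
  ∀ x : J → ℚ, x ≠ 0 → bform B x x < 0

/-- Membership in the lattice `L` (integral coordinates in the basis `E_j`). -/
def isLat (x : J → ℚ) : Prop := ∀ j, ∃ m : ℤ, x j = (m : ℚ)

/-- Membership in the dual lattice `L' ⊂ L ⊗ ℚ`. -/
def isDual [Fintype J] [DecidableEq J] (B : Matrix J J ℤ) (x : J → ℚ) : Prop :=
  ∀ j, ∃ m : ℤ, bform B x (Pi.single j 1) = (m : ℚ)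

/-- Membership in the anti-nef cone `NE_ℚ = {x : (x,E_j) ≥ 0 ∀ j}`. -/
def inNE [Fintype J] [DecidableEq J] (B : Matrix J J ℤ) (x : J → ℚ) : Prop :=
  ∀ j, 0 ≤ bform B x (Pi.single j 1)

/-- Effective rational cycles: all coordinates nonnegative. -/
def Effective (x : J → ℚ) : Prop := ∀ j, 0 ≤ x j

/-- `χ(x) = -(x, x+K)/2` (Riemann–Roch). -/
def chi [Fintype J] (B : Matrix J J ℤ) (K x : J → ℚ) : ℚ := -(bform B x (x + K)) / 2

section Aux

variable [Fintype J] [DecidableEq J]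

lemma bform_single (B : Matrix J J ℤ) (x : J → ℚ) (j : J) :
    bform B x (Pi.single j 1) = ∑ i, x i * (B i j : ℚ) := by
  simp [bform, Matrix.mulVec_single, dotProduct]

lemma bform_sub_left (B : Matrix J J ℤ) (x y z : J → ℚ) :
    bform B (x - y) z = bform B x z - bform B y z := by
  simp [bform, sub_dotProduct]

lemma bform_add_left (B : Matrix J J ℤ) (x y z : J → ℚ) :
    bform B (x + y) z = bform B x z + bform B y z := by
  simp [bform, add_dotProduct]

lemma bform_add_right (B : Matrix J J ℤ) (x y z : J → ℚ) :
    bform B x (y + z) = bform B x y + bform B x z := by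
  simp [bform, Matrix.mulVec_add, dotProduct_add]

lemma bform_eq_sum (B : Matrix J J ℤ) (x y : J → ℚ) :
    bform B x y = ∑ i, ∑ j, x i * (B i j : ℚ) * y j := by
  simp [bform, dotProduct, Matrix.mulVec, Finset.mul_sum, mul_assoc]

/-- closure of the solution set under pointwise min -/
lemma inNE_min (B : Matrix J J ℤ) (hoff : ∀ i j, i ≠ j → 0 ≤ B i j)
    (l' l₁ l₂ : J → ℚ)
    (h1 : inNE B (l' - l₁)) (h2 : inNE B (l' - l₂)) :
    inNE B (l' - fun j => min (l₁ j) (l₂ j)) := by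
  intro j
  set mm : J → ℚ := fun i => min (l₁ i) (l₂ i) with hmm
  have key : ∀ l : J → ℚ, l j = mm j → (∀ i, mm i ≤ l i) →
      inNE B (l' - l) → 0 ≤ bform B (l' - mm) (Pi.single j 1) := by
    intro l hlj hle hNE
    have expand : (l' - mm) = (l' - l) + (l - mm) := by
      funext i; simp only [Pi.sub_apply, Pi.add_apply]; ring
    have h0 : 0 ≤ bform B (l - mm) (Pi.single j 1) := by
      rw [bform_single]
      apply Finset.sum_nonneg
      intro i _
      rcases eq_or_ne i j with rfl | hij
      · rw [show (l - mm) i = 0 by simp only [Pi.sub_apply, hlj]; ring]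
        simp
      · apply mul_nonneg
        · simp only [Pi.sub_apply]; linarith [hle i]
        · exact_mod_cast hoff i j hij
    have : bform B (l' - mm) (Pi.single j 1)
        = bform B (l' - l) (Pi.single j 1) + bform B (l - mm) (Pi.single j 1) := by
      rw [expand, bform_add_left]
    have := hNE j
    linarith
  rcases le_total (l₁ j) (l₂ j) with h | h
  · exact key l₁ (by simp [hmm, min_eq_left h]) (fun i => min_le_left _ _) h1
  · exact key l₂ (by simp [hmm, min_eq_right h]) (fun i => min_le_right _ _) h2

/-- Existence of at least one integral effective solution. -/
lemma exists_sol (B : Matrix J J ℤ) (hsym : B.IsSymm) (hneg : NegDef B)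
    (hoff : ∀ i j, i ≠ j → 0 ≤ B i j) (l' : J → ℚ) :
    ∃ l : J → ℚ, isLat l ∧ Effective l ∧ inNE B (l' - l) := by
  set B' : Matrix J J ℚ := B.map (fun n => (n : ℚ)) with hB'
  -- step 1: solve B' w = -1
  have hinj : Function.Injective B'.mulVecLin := by
    rw [injective_iff_map_eq_zero]
    intro x hx
    by_contra hx0
    have h1 := hneg x hx0
    have h2 : bform B x x = 0 := by
      rw [bform, ← hB', show B'.mulVec x = 0 from hx]
      simp
    linarith
  obtain ⟨w, hw⟩ := (LinearMap.injective_iff_surjective.mp hinj) (fun _ => (-1 : ℚ))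
  rw [Matrix.mulVecLin_apply] at hw
  -- step 2: w ≥ 0
  have hwpos : ∀ j, 0 ≤ w j := by
    by_contra hcon
    push_neg at hcon
    obtain ⟨j0, hj0⟩ := hcon
    set wn : J → ℚ := fun j => max (-(w j)) 0 with hwn
    have hwn0 : wn ≠ 0 := by
      intro h
      have := congrFun h j0
      simp [hwn] at this
      linarith
    have hterm : ∀ i, 0 ≤ wn i := fun i => le_max_right _ _
    have h1 : bform B wn w = -∑ j, wn j := by
      rw [bform, ← hB', hw]
      simp [dotProduct]
    have h2 : 0 ≤ bform B wn (wn + w) := by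
      rw [bform_eq_sum]
      apply Finset.sum_nonneg
      intro i _
      apply Finset.sum_nonneg
      intro j _
      rcases eq_or_ne i j with rfl | hij
      · have hz : wn i * (wn i + w i) = 0 := by
          rcases le_total 0 (w i) with h | h
          · rw [show wn i = 0 by simp [hwn]; linarith]; ring
          · rw [show wn i = -(w i) by simp [hwn]; linarith]; ring
        calc wn i * (B i i : ℚ) * ((wn + w) i)
            = (wn i * ((wn + w) i)) * (B i i : ℚ) := by ring
          _ = 0 := by rw [show (wn + w) i = wn i + w i from rfl, hz, zero_mul]
          _ ≥ 0 := le_refl 0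
      · apply mul_nonneg (mul_nonneg (hterm i) _)
        · have : 0 ≤ wn j + w j := by
            rcases le_total 0 (w j) with h | h
            · have : 0 ≤ wn j := hterm j; linarith
            · rw [show wn j = -(w j) by simp [hwn]; linarith]; linarith
          simpa using this
        · exact_mod_cast hoff i j hij
    have hlin : bform B wn (wn + w) = bform B wn wn + bform B wn w :=
      bform_add_right B wn wn w
    have hsum : 0 ≤ ∑ j, wn j := Finset.sum_nonneg (fun j _ => hterm j)
    have := hneg wn hwn0
    linarith
  -- step 3: clear denominators, scale
  set N : ℕ := ∏ j, (w j).den with hN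
  have hN1 : 1 ≤ N := Nat.one_le_iff_ne_zero.mpr
    (Finset.prod_ne_zero_iff.mpr (fun j _ => (w j).den_nz))
  set d : J → ℚ := fun j => bform B l' (Pi.single j 1) with hd
  obtain ⟨t, ht⟩ := exists_nat_ge (∑ j, |d j|)
  refine ⟨fun j => ((t * N : ℕ) : ℚ) * w j, ?_, ?_, ?_⟩
  · -- isLat
    intro j
    obtain ⟨k, hk⟩ : (w j).den ∣ t * N := Dvd.dvd.mul_left
      (Finset.dvd_prod_of_mem _ (Finset.mem_univ j)) t
    refine ⟨k * (w j).num, ?_⟩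
    rw [hk]
    push_cast
    rw [mul_comm ((w j).den : ℚ) (k : ℚ), mul_assoc, Rat.den_mul_eq_num]
  · -- Effective
    intro j
    exact mul_nonneg (by positivity) (hwpos j)
  · -- inNE
    intro j
    have hBw : ∑ i, w i * (B i j : ℚ) = -1 := by
      have hBsymm : ∀ i, (B i j : ℚ) = B' j i := by
        intro i
        have : B i j = B j i := by
          conv_lhs => rw [← hsym]
          rfl
        simp [hB', this]
      calc ∑ i, w i * (B i j : ℚ) = ∑ i, B' j i * w i := by
            apply Finset.sum_congr rfl; intro i _; rw [hBsymm i, mul_comm]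
        _ = B'.mulVec w j := rfl
        _ = -1 := by rw [hw]
    have e2 : bform B (fun i => ((t * N : ℕ) : ℚ) * w i) (Pi.single j 1)
        = -((t * N : ℕ) : ℚ) := by
      rw [bform_single]
      have step : ∀ i : J, ((fun i => ((t * N : ℕ) : ℚ) * w i) i) * (B i j : ℚ)
          = ((t * N : ℕ) : ℚ) * (w i * (B i j : ℚ)) := fun i => by ring
      simp_rw [step]
      rw [← Finset.mul_sum, hBw]
      ring
    rw [bform_sub_left, e2, show bform B l' (Pi.single j 1) = d j from rfl]
    have habs : |d j| ≤ ∑ i, |d i| :=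
      Finset.single_le_sum (fun i _ => abs_nonneg (d i)) (Finset.mem_univ j)
    have h1 : -((t : ℚ)) ≤ d j := by
      have := neg_abs_le (d j)
      linarith
    have h2 : (t : ℚ) ≤ ((t * N : ℕ) : ℚ) := by
      have : t ≤ t * N := Nat.le_mul_of_pos_right t hN1
      exact_mod_cast this
    linarith

end Aux

/-- existence and uniqueness of the minimal effective cycle
`l_{l'} ∈ L` with `l' - l_{l'} ∈ NE_ℚ`. -/
theorem stmt2 {J : Type*} [Fintype J] [DecidableEq J]
    (B : Matrix J J ℤ)
    (hsym : B.IsSymm)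
    (hneg : NegDef B)
    (hoff : ∀ i j, i ≠ j → 0 ≤ B i j)
    (l' : J → ℚ) (hl' : isDual B l') :
    ∃! l : J → ℚ, isLat l ∧ Effective l ∧ inNE B (l' - l) ∧
      ∀ l₂ : J → ℚ, isLat l₂ → Effective l₂ → inNE B (l' - l₂) → l ≤ l₂ := by
  classical
  obtain ⟨l₀, hl₀⟩ := exists_sol B hsym hneg hoff l'
  set S : Set (J → ℚ) := {l | isLat l ∧ Effective l ∧ inNE B (l' - l)} with hS
  have hsum : ∀ l ∈ S, ∃ n : ℕ, ∑ j, l j = (n : ℚ) := by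
    intro l hl
    choose m hm using hl.1
    refine ⟨∑ j, (m j).toNat, ?_⟩
    push_cast
    apply Finset.sum_congr rfl
    intro j _
    rw [hm j]
    congr 1
    refine (Int.toNat_of_nonneg ?_).symm
    have := hl.2.1 j
    rw [hm j] at this
    exact_mod_cast this
  set T : Set ℕ := {n | ∃ l ∈ S, ∑ j, l j = (n : ℚ)} with hT
  have hTne : T.Nonempty := by
    obtain ⟨n, hn⟩ := hsum l₀ hl₀
    exact ⟨n, l₀, hl₀, hn⟩
  obtain ⟨m, hmS, hmsum⟩ := Nat.sInf_mem hTne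
  have hminS : ∀ l₂ ∈ S, m ≤ l₂ := by
    intro l₂ hl₂
    set mm : J → ℚ := fun j => min (m j) (l₂ j) with hmm
    have hmmS : mm ∈ S := by
      refine ⟨?_, ?_, inNE_min B hoff l' m l₂ hmS.2.2 hl₂.2.2⟩
      · intro j
        obtain ⟨a, ha⟩ := hmS.1 j
        obtain ⟨b, hb⟩ := hl₂.1 j
        refine ⟨min a b, ?_⟩
        show min (m j) (l₂ j) = ((min a b : ℤ) : ℚ)
        rw [ha, hb]
        push_cast
        rfl
      · intro j
        exact le_min (hmS.2.1 j) (hl₂.2.1 j)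
    obtain ⟨k, hk⟩ := hsum mm hmmS
    have h1 : sInf T ≤ k := Nat.sInf_le ⟨mm, hmmS, hk⟩
    have h2 : ∑ j, mm j ≤ ∑ j, m j :=
      Finset.sum_le_sum (fun j _ => min_le_left _ _)
    rw [hk, hmsum] at h2
    have hk' : k = sInf T := le_antisymm (by exact_mod_cast h2) h1
    have hsumeq : ∑ j, mm j = ∑ j, m j := by
      rw [hk, hmsum, hk']
    have heq := (Finset.sum_eq_sum_iff_of_le
      (fun j (_ : j ∈ Finset.univ) => min_le_left (m j) (l₂ j))).mp hsumeq
    intro j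
    have hj := heq j (Finset.mem_univ j)
    calc m j = mm j := hj.symm
      _ ≤ l₂ j := min_le_right _ _
  refine ⟨m, ⟨hmS.1, hmS.2.1, hmS.2.2, fun l₂ h1 h2 h3 => hminS l₂ ⟨h1, h2, h3⟩⟩, ?_⟩
  rintro y ⟨hy1, hy2, hy3, hymin⟩
  exact le_antisymm (hymin m hmS.1 hmS.2.1 hmS.2.2) (hminS y ⟨hy1, hy2, hy3⟩)
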